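/- Let B ∈ (0,1) and A ∈ (0,1), and define U and V₀ (with the constant K) as below. Then: (i) V₀(A) = U(A) (continuous fit holds by the choice of K); and (ii) V₀'(A) = U'(A) (smooth fit) holds if and only if A solves equation (A). -/

import Mathlib

noncomputable section

/-- The function `U₁(x) = (c₁(1-x)/(4μ²))·(ln((1+x)/(1-x)) + 2/(1-B²))`. -/
def U₁ (μ c₁ B x : ℝ) : ℝ :=
  c₁ * (1 - x) / (4 * μ ^ 2) * (Real.log ((1 + x) / (1 - x)) + 2 / (1 - B ^ 2))

/-- The function `U` of the switching problem: `U(x) = U₁(x)` for `x ∈ (-B, 1]` and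
`U(x) = U₁(-x) + c₂` for `x ∈ (-1, -B]`. -/
def Ufun (μ c₁ c₂ B x : ℝ) : ℝ :=
  if -B < x then U₁ μ c₁ B x else U₁ μ c₁ B (-x) + c₂

/-- The constant `K` of the continuous-fit condition. -/
def Kconst (μ c₀ c₁ A B : ℝ) : ℝ :=
  (c₁ * (1 - A) / (4 * μ ^ 2) + c₀ * A / (2 * μ ^ 2)) * Real.log ((1 + A) / (1 - A))
    + c₁ * (1 - A) / (2 * μ ^ 2 * (1 - B ^ 2))

/-- The function `V₀(x) = (c₀x/(2μ²))·ln((1-x)/(1+x)) + K`. -/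
def V₀ (μ c₀ c₁ A B x : ℝ) : ℝ :=
  c₀ * x / (2 * μ ^ 2) * Real.log ((1 - x) / (1 + x)) + Kconst μ c₀ c₁ A B

/-- Let `A, B ∈ (0,1)`. Then: (i) `V₀(A) = U(A)` (continuous fit
holds by the choice of `K`); and (ii) `V₀'(A) = U'(A)` (smooth fit) holds if and only
if `A` solves equation (A). -/
theorem continuous_and_smooth_fit_at_A (μ c₀ c₁ c₂ : ℝ) (hμ : 0 < μ) (hc₀ : 0 < c₀)
    (hc₁ : 0 < c₁) (hc₂ : 0 < c₂) (A B : ℝ) (hA : A ∈ Set.Ioo (0 : ℝ) 1)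
    (hB : B ∈ Set.Ioo (0 : ℝ) 1) :
    V₀ μ c₀ c₁ A B A = Ufun μ c₁ c₂ B A ∧
    (deriv (V₀ μ c₀ c₁ A B) A = deriv (Ufun μ c₁ c₂ B) A ↔
      (c₁ / (2 * c₀) - 1) * Real.log ((1 - A) / (1 + A))
        + (2 / (1 + A)) * (c₁ / (2 * c₀) + A / (1 - A)) = c₁ / (c₀ * (1 - B ^ 2))) := by
  obtain ⟨hA0, hA1⟩ := hA
  obtain ⟨hB0, hB1⟩ := hB
  have h1A : (0:ℝ) < 1 + A := by linarith
  have h1A' : (0:ℝ) < 1 - A := by linarith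
  have hμ2 : (0:ℝ) < μ ^ 2 := by positivity
  have hB2 : (0:ℝ) < 1 - B ^ 2 := by nlinarith
  have hUA : Ufun μ c₁ c₂ B A = U₁ μ c₁ B A := if_pos (by linarith)
  have hmemIoo : Set.Ioo (-1:ℝ) 1 ∈ nhds A := Ioo_mem_nhds (by linarith) (by linarith)
  -- derivatives of logs
  have hlog1 : HasDerivAt (fun x : ℝ => Real.log (1 + x)) (1 / (1 + A)) A := by
    have h := ((hasDerivAt_id A).const_add 1).log h1A.ne'
    simpa using h
  have hlog2 : HasDerivAt (fun x : ℝ => Real.log (1 - x)) (-(1 / (1 - A))) A := by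
    have h := ((hasDerivAt_id A).const_sub 1).log h1A'.ne'
    rw [show -(1 / (1 - A)) = -1 / (1 - A) by ring]
    simpa using h
  -- derivative of U₁ at A
  set dU : ℝ := -(c₁ / (4 * μ ^ 2)) * ((Real.log (1 + A) - Real.log (1 - A)) + 2 / (1 - B ^ 2))
      + c₁ * (1 - A) / (4 * μ ^ 2) * (1 / (1 + A) + 1 / (1 - A)) with hdU
  have hU' : HasDerivAt (U₁ μ c₁ B) dU A := by
    have hf1 : HasDerivAt (fun x : ℝ => c₁ * (1 - x) / (4 * μ ^ 2)) (-(c₁ / (4 * μ ^ 2))) A := by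
      have h := (((hasDerivAt_id A).const_sub 1).const_mul c₁).div_const (4 * μ ^ 2)
      exact h.congr_deriv (by ring)
    have hL : HasDerivAt (fun x : ℝ => (Real.log (1 + x) - Real.log (1 - x)) + 2 / (1 - B ^ 2))
        (1 / (1 + A) + 1 / (1 - A)) A := by
      have h := (hlog1.sub hlog2).add_const (2 / (1 - B ^ 2))
      exact h.congr_deriv (by ring)
    have hg : HasDerivAt (fun x : ℝ => c₁ * (1 - x) / (4 * μ ^ 2) *
        ((Real.log (1 + x) - Real.log (1 - x)) + 2 / (1 - B ^ 2))) dU A := by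
      have h := hf1.mul hL
      exact h
    apply hg.congr_of_eventuallyEq
    filter_upwards [hmemIoo] with x hx
    rw [U₁, Real.log_div (by linarith [hx.1] : (1:ℝ) + x ≠ 0) (by linarith [hx.2] : (1:ℝ) - x ≠ 0)]
  -- derivative of V₀ at A
  set dV : ℝ := c₀ / (2 * μ ^ 2) * (Real.log (1 - A) - Real.log (1 + A))
      + c₀ * A / (2 * μ ^ 2) * (-(1 / (1 - A)) - 1 / (1 + A)) with hdV
  have hV' : HasDerivAt (V₀ μ c₀ c₁ A B) dV A := by
    have hf1 : HasDerivAt (fun x : ℝ => c₀ * x / (2 * μ ^ 2)) (c₀ / (2 * μ ^ 2)) A := by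
      have h := ((hasDerivAt_id A).const_mul c₀).div_const (2 * μ ^ 2)
      exact h.congr_deriv (by ring)
    have hL : HasDerivAt (fun x : ℝ => Real.log (1 - x) - Real.log (1 + x))
        (-(1 / (1 - A)) - 1 / (1 + A)) A := hlog2.sub hlog1
    have hg : HasDerivAt (fun x : ℝ => c₀ * x / (2 * μ ^ 2) *
        (Real.log (1 - x) - Real.log (1 + x)) + Kconst μ c₀ c₁ A B) dV A := by
      have h := (hf1.mul hL).add_const (Kconst μ c₀ c₁ A B)
      exact h
    apply hg.congr_of_eventuallyEq
    filter_upwards [hmemIoo] with x hx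
    rw [V₀, Real.log_div (by linarith [hx.2] : (1:ℝ) - x ≠ 0) (by linarith [hx.1] : (1:ℝ) + x ≠ 0)]
  have hderU : deriv (Ufun μ c₁ c₂ B) A = dU := by
    have hev : Ufun μ c₁ c₂ B =ᶠ[nhds A] U₁ μ c₁ B := by
      filter_upwards [Ioi_mem_nhds (show -B < A by linarith)] with x hx
      exact if_pos hx
    rw [hev.deriv_eq, hU'.deriv]
  constructor
  · rw [hUA, V₀, Kconst, U₁, Real.log_div h1A.ne' h1A'.ne', Real.log_div h1A'.ne' h1A.ne']
    field_simp
    ring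
  · rw [hV'.deriv, hderU, Real.log_div h1A'.ne' h1A.ne']
    have hfactor : dV - dU = (-(c₀ / (2 * μ ^ 2))) *
        ((c₁ / (2 * c₀) - 1) * (Real.log (1 - A) - Real.log (1 + A))
          + (2 / (1 + A)) * (c₁ / (2 * c₀) + A / (1 - A)) - c₁ / (c₀ * (1 - B ^ 2))) := by
      rw [hdU, hdV]
      field_simp
      ring
    have hco : (-(c₀ / (2 * μ ^ 2))) ≠ 0 := by
      have : (0:ℝ) < c₀ / (2 * μ ^ 2) := by positivity
      linarith
    constructor <;> intro h
    · have h0 : dV - dU = 0 := sub_eq_zero_of_eq h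
      rw [hfactor] at h0
      have h1 := (mul_eq_zero.mp h0).resolve_left hco
      linarith [h1]
    · have h0 : dV - dU = 0 := by
        rw [hfactor]
        have : (c₁ / (2 * c₀) - 1) * (Real.log (1 - A) - Real.log (1 + A))
          + (2 / (1 + A)) * (c₁ / (2 * c₀) + A / (1 - A)) - c₁ / (c₀ * (1 - B ^ 2)) = 0 := by
          linarith
        rw [this, mul_zero]
      linarith [h0]
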